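/- Assume Conditions 1 and 2 and let h be a Borel-measurable function on the closure of (a,b) with E|h(Z)| < ∞, with standard solution g_h of the Stein equation. Then: (a) if a > −∞ and h has a right limit h(a+) at a, then lim_{x↓a} g_h(x) = (h(a+) − E[h(Z)])/γ(a+), so g_h extends continuously to a; (b) if b < ∞ and h has a left limit h(b−) at b, then lim_{x↑b} g_h(x) = (h(b−) − E[h(Z)])/γ(b−), so g_h extends continuously to b. -/

import Mathlib

open MeasureTheory Set Filter Topology

noncomputable section

/-- The open interval `(a,b)` with extended-real endpoints, viewed as a set of reals. -/
def ooE (a b : EReal) : Set ℝ := {x : ℝ | a < (x : EReal) ∧ (x : EReal) < b}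

/-- The closed interval `[a,b] ∩ ℝ` (the closure of `(a,b)` in `ℝ`). -/
def ccE (a b : EReal) : Set ℝ := {x : ℝ | a ≤ (x : EReal) ∧ (x : EReal) ≤ b}

/-- The filter on `ℝ` of right-neighbourhoods of the (possibly infinite) endpoint `a`:
for finite `a` this is `𝓝[>] a`, for `a = ⊥` it is `atBot`. -/
def nhdsGT (a : EReal) : Filter ℝ :=
  Filter.comap (fun x : ℝ => (x : EReal)) (nhdsWithin a (Set.Ioi a))

/-- The filter on `ℝ` of left-neighbourhoods of the (possibly infinite) endpoint `b`. -/
def nhdsLT (b : EReal) : Filter ℝ :=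
  Filter.comap (fun x : ℝ => (x : EReal)) (nhdsWithin b (Set.Iio b))

/-- `f` is (locally) an indefinite integral of `f'` on `s`. -/
def IsLocACOn (f f' : ℝ → ℝ) (s : Set ℝ) : Prop :=
  ∀ x ∈ s, ∀ y ∈ s, IntervalIntegrable f' volume x y ∧ f y - f x = ∫ t in x..y, f' t

/-- `f` is locally absolutely continuous on `s`. -/
def LocACOn (f : ℝ → ℝ) (s : Set ℝ) : Prop := ∃ f', IsLocACOn f f' s

/-- Condition 1: `p` is a probability density which is positive and locally absolutely
continuous on `(a,b)` and vanishes outside of `(a,b)`. -/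
structure Cond1 (a b : EReal) (p : ℝ → ℝ) : Prop where
  lt : a < b
  meas : Measurable p
  nonneg : ∀ x, 0 ≤ p x
  pos : ∀ x ∈ ooE a b, 0 < p x
  zero : ∀ x, x ∉ ooE a b → p x = 0
  integrable : MeasureTheory.Integrable p
  total : ∫ x, p x = 1
  locAC : LocACOn p (ooE a b)

/-- Condition 2: `γ` is Borel measurable, not identically zero, decreasing on `[a,b]`,
with `E|γ(Z)| < ∞` and `E[γ(Z)] = 0`. -/
structure Cond2 (a b : EReal) (p γ : ℝ → ℝ) : Prop where
  meas : Measurable γ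
  ne_zero : ∃ x ∈ ccE a b, γ x ≠ 0
  anti : AntitoneOn γ (ccE a b)
  integrable : MeasureTheory.Integrable (fun x => γ x * p x)
  mean_zero : ∫ x, γ x * p x = 0

/-- `I(x) = ∫_a^x γ(t) p(t) dt` (the density vanishes outside `(a,b)`). -/
def Ifun (γ p : ℝ → ℝ) (x : ℝ) : ℝ := ∫ t in Iic x, γ t * p t

/-- The distribution function `F` of the density `p`. -/
def Ffun (p : ℝ → ℝ) (x : ℝ) : ℝ := ∫ t in Iic x, p t

/-- `η = I/p`. -/
def etaFun (γ p : ℝ → ℝ) (x : ℝ) : ℝ := Ifun γ p x / p x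

/-- `x₀ = sup {x ∈ (a,b) : γ(x) > 0}`. -/
def xZero (a b : EReal) (γ : ℝ → ℝ) : ℝ := sSup {x | x ∈ ooE a b ∧ 0 < γ x}

/-- `E[h(Z)]` for `Z` with density `p`. -/
def meanOf (p h : ℝ → ℝ) : ℝ := ∫ x, h x * p x

/-- The standard solution `g_h` of the Stein equation `η g' + γ g = h - E[h(Z)]`. -/
def gsol (γ p h : ℝ → ℝ) (x : ℝ) : ℝ :=
  (∫ t in Iic x, (h t - meanOf p h) * p t) / (p x * etaFun γ p x)

/-- The derivative of the standard solution, defined everywhere via the Stein equation. -/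
def gsol' (γ p h : ℝ → ℝ) (x : ℝ) : ℝ :=
  (h x - meanOf p h - γ x * gsol γ p h x) / etaFun γ p x

section Aux

lemma nhdsGT_coe (a₀ : ℝ) : nhdsGT (a₀ : EReal) = 𝓝[>] a₀ := by
  unfold _root_.nhdsGT
  rw [nhdsWithin, Filter.comap_inf, Filter.comap_principal, EReal.nhds_coe,
    Filter.comap_map EReal.coe_injective, nhdsWithin]
  congr 1
  ext x
  simp [EReal.coe_lt_coe_iff]

lemma nhdsLT_coe (b₀ : ℝ) : nhdsLT (b₀ : EReal) = 𝓝[<] b₀ := by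
  unfold _root_.nhdsLT
  rw [nhdsWithin, Filter.comap_inf, Filter.comap_principal, EReal.nhds_coe,
    Filter.comap_map EReal.coe_injective, nhdsWithin]
  congr 1
  ext x
  simp [EReal.coe_lt_coe_iff]

/-- Ratio of sliding integrals over `(a₀, x]` tends to the limit of `u` at `a₀⁺`. -/
lemma core_right (a₀ : ℝ) (u p : ℝ → ℝ) (c : ℝ)
    (hu : Tendsto u (𝓝[>] a₀) (𝓝 c))
    (hp : Integrable p) (hup : Integrable (fun t => u t * p t))
    (hpnn : ∀ t, 0 ≤ p t)
    (hpos : ∀ᶠ x in 𝓝[>] a₀, 0 < ∫ t in Ioc a₀ x, p t) :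
    Tendsto (fun x => (∫ t in Ioc a₀ x, u t * p t) / ∫ t in Ioc a₀ x, p t)
      (𝓝[>] a₀) (𝓝 c) := by
  rw [Metric.tendsto_nhds]
  intro ε hε
  have hε2 : 0 < ε / 2 := by linarith
  have hmem : {t | dist (u t) c < ε / 2} ∈ 𝓝[>] a₀ := hu (Metric.ball_mem_nhds c hε2)
  obtain ⟨r, hr, hsub⟩ := mem_nhdsGT_iff_exists_Ioo_subset.1 hmem
  filter_upwards [hpos, Ioo_mem_nhdsGT_of_mem (⟨le_rfl, hr⟩ : a₀ ∈ Ico a₀ r)] with x hF hx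
  have hsub2 : ∀ t ∈ Ioc a₀ x, dist (u t) c < ε / 2 :=
    fun t ht => hsub ⟨ht.1, lt_of_le_of_lt ht.2 hx.2⟩
  set F := ∫ t in Ioc a₀ x, p t with hFdef
  set A := ∫ t in Ioc a₀ x, u t * p t with hAdef
  have key : |A - c * F| ≤ ε / 2 * F := by
    have e1 : A - c * F = ∫ t in Ioc a₀ x, (u t * p t - c * p t) := by
      rw [hAdef, hFdef, ← integral_const_mul,
        ← integral_sub hup.integrableOn (hp.integrableOn.const_mul c)]
    rw [e1]
    calc |∫ t in Ioc a₀ x, (u t * p t - c * p t)|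
        ≤ ∫ t in Ioc a₀ x, |u t * p t - c * p t| := by
          simpa [Real.norm_eq_abs] using
            norm_integral_le_integral_norm (μ := volume.restrict (Ioc a₀ x))
              (fun t => u t * p t - c * p t)
      _ ≤ ∫ t in Ioc a₀ x, ε / 2 * p t := by
          have hi1 : IntegrableOn (fun t => |u t * p t - c * p t|) (Ioc a₀ x) volume :=
            (hup.integrableOn.sub (hp.integrableOn.const_mul c)).abs
          apply setIntegral_mono_on hi1
            (hp.integrableOn.const_mul (ε / 2)) measurableSet_Ioc
          intro t ht
          have e2 : u t * p t - c * p t = (u t - c) * p t := by ring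
          rw [e2, abs_mul, abs_of_nonneg (hpnn t)]
          exact mul_le_mul_of_nonneg_right
            (le_of_lt (by rw [← Real.dist_eq]; exact hsub2 t ht)) (hpnn t)
      _ = ε / 2 * F := by rw [integral_const_mul]
  have hF' : F ≠ 0 := ne_of_gt hF
  rw [Real.dist_eq]
  have e3 : A / F - c = (A - c * F) / F := by field_simp
  rw [e3, abs_div, abs_of_pos hF]
  calc |A - c * F| / F ≤ ε / 2 * F / F := by gcongr
    _ = ε / 2 := by field_simp
    _ < ε := by linarith

/-- Ratio of sliding integrals over `(x, b₀]` tends to the limit of `u` at `b₀⁻`. -/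
lemma core_left (b₀ : ℝ) (u p : ℝ → ℝ) (c : ℝ)
    (hu : Tendsto u (𝓝[<] b₀) (𝓝 c))
    (hp : Integrable p) (hup : Integrable (fun t => u t * p t))
    (hpnn : ∀ t, 0 ≤ p t)
    (hpos : ∀ᶠ x in 𝓝[<] b₀, 0 < ∫ t in Ioc x b₀, p t) :
    Tendsto (fun x => (∫ t in Ioc x b₀, u t * p t) / ∫ t in Ioc x b₀, p t)
      (𝓝[<] b₀) (𝓝 c) := by
  rw [Metric.tendsto_nhds]
  intro ε hε
  have hε2 : 0 < ε / 2 := by linarith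
  have hmem : {t | dist (u t) c < ε / 2} ∈ 𝓝[<] b₀ := hu (Metric.ball_mem_nhds c hε2)
  obtain ⟨r, hr, hsub⟩ := mem_nhdsLT_iff_exists_Ioo_subset.1 hmem
  filter_upwards [hpos, Ioo_mem_nhdsLT_of_mem (⟨hr, le_rfl⟩ : b₀ ∈ Ioc r b₀)] with x hF hx
  have hIoo : ∀ (f : ℝ → ℝ), ∫ t in Ioc x b₀, f t = ∫ t in Ioo x b₀, f t :=
    fun f => (setIntegral_congr_set Ioo_ae_eq_Ioc).symm
  have hsub2 : ∀ t ∈ Ioo x b₀, dist (u t) c < ε / 2 :=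
    fun t ht => hsub ⟨lt_trans hx.1 ht.1, ht.2⟩
  rw [hIoo (fun t => u t * p t), hIoo p] at *
  set F := ∫ t in Ioo x b₀, p t with hFdef
  set A := ∫ t in Ioo x b₀, u t * p t with hAdef
  have key : |A - c * F| ≤ ε / 2 * F := by
    have e1 : A - c * F = ∫ t in Ioo x b₀, (u t * p t - c * p t) := by
      rw [hAdef, hFdef, ← integral_const_mul,
        ← integral_sub hup.integrableOn (hp.integrableOn.const_mul c)]
    rw [e1]
    calc |∫ t in Ioo x b₀, (u t * p t - c * p t)|
        ≤ ∫ t in Ioo x b₀, |u t * p t - c * p t| := by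
          simpa [Real.norm_eq_abs] using
            norm_integral_le_integral_norm (μ := volume.restrict (Ioo x b₀))
              (fun t => u t * p t - c * p t)
      _ ≤ ∫ t in Ioo x b₀, ε / 2 * p t := by
          have hi1 : IntegrableOn (fun t => |u t * p t - c * p t|) (Ioo x b₀) volume :=
            (hup.integrableOn.sub (hp.integrableOn.const_mul c)).abs
          apply setIntegral_mono_on hi1
            (hp.integrableOn.const_mul (ε / 2)) measurableSet_Ioo
          intro t ht
          have e2 : u t * p t - c * p t = (u t - c) * p t := by ring
          rw [e2, abs_mul, abs_of_nonneg (hpnn t)]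
          exact mul_le_mul_of_nonneg_right
            (le_of_lt (by rw [← Real.dist_eq]; exact hsub2 t ht)) (hpnn t)
      _ = ε / 2 * F := by rw [integral_const_mul]
  have hF' : F ≠ 0 := ne_of_gt hF
  rw [Real.dist_eq]
  have e3 : A / F - c = (A - c * F) / F := by field_simp
  rw [e3, abs_div, abs_of_pos hF]
  calc |A - c * F| / F ≤ ε / 2 * F / F := by gcongr
    _ = ε / 2 := by field_simp
    _ < ε := by linarith

end Aux
section Aux2

lemma setIntegral_Iic_eq_Ioc' (f : ℝ → ℝ) (a₀ x : ℝ) (hax : a₀ ≤ x)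
    (hf : Integrable f) (h0 : ∀ t, t ≤ a₀ → f t = 0) :
    ∫ t in Iic x, f t = ∫ t in Ioc a₀ x, f t := by
  have h1 : ∫ t in Iic a₀, f t = 0 := by
    rw [setIntegral_congr_fun measurableSet_Iic
      (fun t ht => h0 t ht : EqOn f (fun _ => (0 : ℝ)) (Iic a₀))]
    simp
  rw [← Iic_union_Ioc_eq_Iic hax,
    setIntegral_union (Iic_disjoint_Ioc le_rfl) measurableSet_Ioc
      hf.integrableOn hf.integrableOn, h1, zero_add]

lemma setIntegral_Iic_eq_neg_Ioc' (f : ℝ → ℝ) (b₀ x : ℝ) (hxb : x ≤ b₀)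
    (hf : Integrable f) (htot : ∫ t, f t = 0) (h0 : ∀ t, b₀ < t → f t = 0) :
    ∫ t in Iic x, f t = -∫ t in Ioc x b₀, f t := by
  have h1 : ∫ t in Ioi b₀, f t = 0 := by
    rw [setIntegral_congr_fun measurableSet_Ioi
      (fun t ht => h0 t ht : EqOn f (fun _ => (0 : ℝ)) (Ioi b₀))]
    simp
  have h2 : ∫ t in Ioi x, f t = (∫ t in Ioc x b₀, f t) + ∫ t in Ioi b₀, f t := by
    rw [← setIntegral_union (Ioc_disjoint_Ioi le_rfl) measurableSet_Ioi
      hf.integrableOn hf.integrableOn, Ioc_union_Ioi_eq_Ioi hxb]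
  have h3 : (∫ t in Iic x, f t) + ∫ t in Ioi x, f t = ∫ t, f t := by
    rw [← compl_Iic]
    exact integral_add_compl measurableSet_Iic hf
  rw [htot] at h3
  rw [h2, h1, add_zero] at h3
  linarith

end Aux2
/-- Boundary behaviour of the standard solution `g_h`: at a finite endpoint where `h` has a
one-sided limit, `g_h` tends to `(h(a+) - E[h(Z)])/γ(a+)`, resp. `(h(b-) - E[h(Z)])/γ(b-)`,
and hence extends continuously. -/
theorem prop_gsol_boundary (a b : EReal) (p γ h : ℝ → ℝ)
    (h1 : Cond1 a b p) (h2 : Cond2 a b p γ)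
    (hmeas : Measurable h) (hint : MeasureTheory.Integrable (fun x => h x * p x)) :
    (∀ hA γA : ℝ, a ≠ ⊥ →
      Tendsto h (nhdsGT a) (𝓝 hA) → Tendsto γ (nhdsGT a) (𝓝 γA) →
      Tendsto (gsol γ p h) (nhdsGT a) (𝓝 ((hA - meanOf p h) / γA))) ∧
    (∀ hB γB : ℝ, b ≠ ⊤ →
      Tendsto h (nhdsLT b) (𝓝 hB) → Tendsto γ (nhdsLT b) (𝓝 γB) →
      Tendsto (gsol γ p h) (nhdsLT b) (𝓝 ((hB - meanOf p h) / γB))) := by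
  set m := meanOf p h with hm
  have hq : Integrable (fun t => (h t - m) * p t) :=
    (hint.sub (h1.integrable.const_mul m)).congr (ae_of_all _ fun t => by simp only [Pi.sub_apply]; ring)
  have hqtot : ∫ t, (h t - m) * p t = 0 := by
    have e : ∫ t, (h t - m) * p t = ∫ t, (h t * p t - m * p t) := by
      congr 1; funext t; ring
    rw [e, integral_sub hint (h1.integrable.const_mul m), integral_const_mul, h1.total,
      mul_one, hm, meanOf, sub_self]
  constructor
  · -- part (a)
    intro hA γA ha hh hγ
    have haT : a ≠ ⊤ := (lt_of_lt_of_le h1.lt le_top).ne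
    obtain ⟨a₀, rfl⟩ : ∃ a₀ : ℝ, a = (a₀ : EReal) := ⟨a.toReal, (EReal.coe_toReal haT ha).symm⟩
    rw [nhdsGT_coe] at hh hγ ⊢
    have hzero_left : ∀ t, t ≤ a₀ → p t = 0 := fun t ht =>
      h1.zero t fun hmem => absurd (EReal.coe_lt_coe_iff.1 hmem.1) (not_lt.2 ht)
    by_cases hγA : γA = 0
    · -- degenerate case
      have hnp : ∀ t ∈ ooE (a₀ : EReal) b, γ t ≤ 0 := by
        intro t ht
        have ht1 : a₀ < t := EReal.coe_lt_coe_iff.1 ht.1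
        have hev : ∀ᶠ s in 𝓝[>] a₀, γ t ≤ γ s := by
          filter_upwards [Ioo_mem_nhdsGT_of_mem (⟨le_rfl, ht1⟩ : a₀ ∈ Ico a₀ t)] with s hs
          exact h2.anti
            ⟨le_of_lt (EReal.coe_lt_coe_iff.2 hs.1),
              le_of_lt (lt_trans (EReal.coe_lt_coe_iff.2 hs.2) ht.2)⟩
            ⟨le_of_lt ht.1, le_of_lt ht.2⟩ (le_of_lt hs.2)
        have := ge_of_tendsto hγ hev
        rw [hγA] at this
        exact this
      have hprod : ∀ x, γ x * p x ≤ 0 := fun x => by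
        by_cases hx : x ∈ ooE (a₀ : EReal) b
        · exact mul_nonpos_of_nonpos_of_nonneg (hnp x hx) (h1.nonneg x)
        · rw [h1.zero x hx, mul_zero]
      have haez : (fun x => γ x * p x) =ᵐ[volume] 0 := by
        have h0 : (fun x => -(γ x * p x)) =ᵐ[volume] 0 := by
          rw [← integral_eq_zero_iff_of_nonneg (fun x => neg_nonneg.2 (hprod x))
            h2.integrable.neg]
          rw [integral_neg, h2.mean_zero, neg_zero]
        filter_upwards [h0] with x hx
        have hx' : -(γ x * p x) = 0 := hx
        simp only [Pi.zero_apply]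
        linarith
      have hI : ∀ x, Ifun γ p x = 0 := fun x =>
        integral_eq_zero_of_ae (ae_restrict_of_ae haez)
      have hg : gsol γ p h = fun _ => 0 := by
        funext x; unfold gsol etaFun; rw [hI, zero_div, mul_zero, div_zero]
      rw [hg, hγA, div_zero]
      exact tendsto_const_nhds
    · -- main case
      obtain ⟨c, hc1, hc2⟩ := exists_between h1.lt
      have hcT : c ≠ ⊤ := (lt_of_lt_of_le hc2 le_top).ne
      have hcB : c ≠ ⊥ := (lt_of_le_of_lt bot_le hc1).ne'
      obtain ⟨r, rfl⟩ : ∃ r : ℝ, c = (r : EReal) := ⟨c.toReal, (EReal.coe_toReal hcT hcB).symm⟩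
      have har : a₀ < r := EReal.coe_lt_coe_iff.1 hc1
      have hmemIoo : Ioo a₀ r ∈ 𝓝[>] a₀ := Ioo_mem_nhdsGT_of_mem ⟨le_rfl, har⟩
      have hpos : ∀ᶠ x in 𝓝[>] a₀, 0 < ∫ t in Ioc a₀ x, p t := by
        filter_upwards [hmemIoo] with x hx
        rw [setIntegral_pos_iff_support_of_nonneg_ae
          (ae_of_all _ h1.nonneg) h1.integrable.integrableOn]
        have hsub : Ioo a₀ x ⊆ Function.support p ∩ Ioc a₀ x := by
          intro t ht
          refine ⟨ne_of_gt (h1.pos t ⟨EReal.coe_lt_coe_iff.2 ht.1, ?_⟩), ht.1, le_of_lt ht.2⟩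
          exact lt_trans (EReal.coe_lt_coe_iff.2 (lt_trans ht.2 hx.2)) hc2
        refine lt_of_lt_of_le ?_ (measure_mono hsub)
        rw [Real.volume_Ioo]
        exact ENNReal.ofReal_pos.2 (by linarith [hx.1])
      have hNum := core_right a₀ (fun t => h t - m) p (hA - m)
        (hh.sub tendsto_const_nhds) h1.integrable hq h1.nonneg hpos
      have hDen := core_right a₀ γ p γA hγ h1.integrable h2.integrable h1.nonneg hpos
      refine (hNum.div hDen hγA).congr' ?_
      filter_upwards [hmemIoo, hpos] with x hx hFpos
      simp only [Pi.div_apply]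
      have hxb : (x : EReal) < b := lt_trans (EReal.coe_lt_coe_iff.2 hx.2) hc2
      have hpx : 0 < p x := h1.pos x ⟨EReal.coe_lt_coe_iff.2 hx.1, hxb⟩
      have hIic1 : ∫ t in Iic x, (h t - m) * p t = ∫ t in Ioc a₀ x, (h t - m) * p t :=
        setIntegral_Iic_eq_Ioc' _ a₀ x (le_of_lt hx.1) hq
          (fun t ht => by rw [hzero_left t ht, mul_zero])
      have hIic2 : Ifun γ p x = ∫ t in Ioc a₀ x, γ t * p t :=
        setIntegral_Iic_eq_Ioc' _ a₀ x (le_of_lt hx.1) h2.integrable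
          (fun t ht => by rw [hzero_left t ht, mul_zero])
      have hpe : p x * etaFun γ p x = Ifun γ p x := by
        rw [etaFun]; field_simp
      rw [gsol, ← hm, hpe, hIic1, hIic2]
      rcases eq_or_ne (∫ t in Ioc a₀ x, γ t * p t) 0 with hD | hD
      · rw [hD, zero_div, div_zero, div_zero]
      · have hFne : (∫ t in Ioc a₀ x, p t) ≠ 0 := ne_of_gt hFpos
        field_simp
  · -- part (b)
    intro hB γB hb hh hγ
    have hbB : b ≠ ⊥ := (lt_of_le_of_lt bot_le h1.lt).ne'
    obtain ⟨b₀, rfl⟩ : ∃ b₀ : ℝ, b = (b₀ : EReal) := ⟨b.toReal, (EReal.coe_toReal hb hbB).symm⟩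
    rw [nhdsLT_coe] at hh hγ ⊢
    have hzero_right : ∀ t, b₀ < t → p t = 0 := fun t ht =>
      h1.zero t fun hmem => absurd (EReal.coe_lt_coe_iff.1 hmem.2) (not_lt.2 (le_of_lt ht))
    by_cases hγB : γB = 0
    · -- degenerate case
      have hnp : ∀ t ∈ ooE a (b₀ : EReal), 0 ≤ γ t := by
        intro t ht
        have ht2 : t < b₀ := EReal.coe_lt_coe_iff.1 ht.2
        have hev : ∀ᶠ s in 𝓝[<] b₀, γ s ≤ γ t := by
          filter_upwards [Ioo_mem_nhdsLT_of_mem (⟨ht2, le_rfl⟩ : b₀ ∈ Ioc t b₀)] with s hs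
          exact h2.anti ⟨le_of_lt ht.1, le_of_lt ht.2⟩
            ⟨le_of_lt (lt_trans ht.1 (EReal.coe_lt_coe_iff.2 hs.1)),
              le_of_lt (EReal.coe_lt_coe_iff.2 hs.2)⟩ (le_of_lt hs.1)
        have := le_of_tendsto hγ hev
        rw [hγB] at this
        exact this
      have hprod : ∀ x, 0 ≤ γ x * p x := fun x => by
        by_cases hx : x ∈ ooE a (b₀ : EReal)
        · exact mul_nonneg (hnp x hx) (h1.nonneg x)
        · rw [h1.zero x hx, mul_zero]
      have haez : (fun x => γ x * p x) =ᵐ[volume] 0 := by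
        rw [← integral_eq_zero_iff_of_nonneg hprod h2.integrable]
        exact h2.mean_zero
      have hI : ∀ x, Ifun γ p x = 0 := fun x =>
        integral_eq_zero_of_ae (ae_restrict_of_ae haez)
      have hg : gsol γ p h = fun _ => 0 := by
        funext x; unfold gsol etaFun; rw [hI, zero_div, mul_zero, div_zero]
      rw [hg, hγB, div_zero]
      exact tendsto_const_nhds
    · -- main case
      obtain ⟨c, hc1, hc2⟩ := exists_between h1.lt
      have hcT : c ≠ ⊤ := (lt_of_lt_of_le hc2 le_top).ne
      have hcB : c ≠ ⊥ := (lt_of_le_of_lt bot_le hc1).ne'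
      obtain ⟨r, rfl⟩ : ∃ r : ℝ, c = (r : EReal) := ⟨c.toReal, (EReal.coe_toReal hcT hcB).symm⟩
      have hrb : r < b₀ := EReal.coe_lt_coe_iff.1 hc2
      have hmemIoo : Ioo r b₀ ∈ 𝓝[<] b₀ := Ioo_mem_nhdsLT_of_mem ⟨hrb, le_rfl⟩
      have hpos : ∀ᶠ x in 𝓝[<] b₀, 0 < ∫ t in Ioc x b₀, p t := by
        filter_upwards [hmemIoo] with x hx
        rw [setIntegral_pos_iff_support_of_nonneg_ae
          (ae_of_all _ h1.nonneg) h1.integrable.integrableOn]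
        have hsub : Ioo x b₀ ⊆ Function.support p ∩ Ioc x b₀ := by
          intro t ht
          refine ⟨ne_of_gt (h1.pos t ⟨?_, EReal.coe_lt_coe_iff.2 ht.2⟩), ht.1, le_of_lt ht.2⟩
          exact lt_trans hc1 (EReal.coe_lt_coe_iff.2 (lt_trans hx.1 ht.1))
        refine lt_of_lt_of_le ?_ (measure_mono hsub)
        rw [Real.volume_Ioo]
        exact ENNReal.ofReal_pos.2 (by linarith [hx.2])
      have hNum := core_left b₀ (fun t => h t - m) p (hB - m)
        (hh.sub tendsto_const_nhds) h1.integrable hq h1.nonneg hpos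
      have hDen := core_left b₀ γ p γB hγ h1.integrable h2.integrable h1.nonneg hpos
      refine (hNum.div hDen hγB).congr' ?_
      filter_upwards [hmemIoo, hpos] with x hx hFpos
      simp only [Pi.div_apply]
      have hax : a < (x : EReal) := lt_trans hc1 (EReal.coe_lt_coe_iff.2 hx.1)
      have hpx : 0 < p x := h1.pos x ⟨hax, EReal.coe_lt_coe_iff.2 hx.2⟩
      have hIic1 : ∫ t in Iic x, (h t - m) * p t = -∫ t in Ioc x b₀, (h t - m) * p t :=
        setIntegral_Iic_eq_neg_Ioc' _ b₀ x (le_of_lt hx.2) hq hqtot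
          (fun t ht => by rw [hzero_right t ht, mul_zero])
      have hIic2 : Ifun γ p x = -∫ t in Ioc x b₀, γ t * p t :=
        setIntegral_Iic_eq_neg_Ioc' _ b₀ x (le_of_lt hx.2) h2.integrable h2.mean_zero
          (fun t ht => by rw [hzero_right t ht, mul_zero])
      have hpe : p x * etaFun γ p x = Ifun γ p x := by
        rw [etaFun]; field_simp
      rw [gsol, ← hm, hpe, hIic1, hIic2, neg_div_neg_eq]
      rcases eq_or_ne (∫ t in Ioc x b₀, γ t * p t) 0 with hD | hD
      · rw [hD, zero_div, div_zero, div_zero]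
      · have hFne : (∫ t in Ioc x b₀, p t) ≠ 0 := ne_of_gt hFpos
        field_simp

end
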